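/- Let γ₁, γ₂ > 0 with γ₁ ≠ γ₂, and define k(y) = sqrt(γ₁² + γ₂² + 2γ₁γ₂ cos(y)), γ₊ = γ₁ + γ₂. Then for all y ∈ [0, π], γ₊ - k(y) ≥ (2 min{γ₁, γ₂}/π²)·y². -/

import Mathlib

open Real

theorem gamma_plus_minus_k_lower_bound
    (γ₁ γ₂ : ℝ) (h₁ : 0 < γ₁) (h₂ : 0 < γ₂) (hne : γ₁ ≠ γ₂)
    (k : ℝ → ℝ)
    (hk : ∀ y, k y = Real.sqrt (γ₁ ^ 2 + γ₂ ^ 2 + 2 * γ₁ * γ₂ * Real.cos y))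
    (y : ℝ) (hy : y ∈ Set.Icc 0 π) :
    (γ₁ + γ₂) - k y ≥ (2 * min γ₁ γ₂ / π ^ 2) * y ^ 2 := by
  obtain ⟨hy0, hyπ⟩ := hy
  have hπ : (0:ℝ) < π := Real.pi_pos
  set m := min γ₁ γ₂ with hm
  set M := max γ₁ γ₂ with hM
  have hmM : m * M = γ₁ * γ₂ := min_mul_max _ _
  have hms : m + M = γ₁ + γ₂ := min_add_max _ _
  have hmle : m ≤ M := min_le_max
  have hm0 : 0 < m := lt_min h₁ h₂
  set c := Real.cos (y / 2) with hc
  have hc0 : 0 ≤ c := Real.cos_nonneg_of_mem_Icc ⟨by linarith, by linarith⟩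
  have hc1 : c ≤ 1 := Real.cos_le_one _
  have hcosy : Real.cos y = 2 * c ^ 2 - 1 := by
    have := Real.cos_sq (y / 2)
    rw [show 2 * (y/2) = y by ring] at this
    rw [hc]; linarith
  -- key upper bound on k
  have hR0 : 0 ≤ (M - m) + 2 * m * c := by nlinarith
  have hksq : γ₁ ^ 2 + γ₂ ^ 2 + 2 * γ₁ * γ₂ * Real.cos y ≤ ((M - m) + 2 * m * c) ^ 2 := by
    have h1 : γ₁ ^ 2 + γ₂ ^ 2 = M ^ 2 + m ^ 2 := by
      rcases le_total γ₁ γ₂ with hle | hle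
      · rw [hm, hM, min_eq_left hle, max_eq_right hle]; ring
      · rw [hm, hM, min_eq_right hle, max_eq_left hle]
    rw [hcosy]
    nlinarith [mul_nonneg (mul_nonneg (mul_nonneg hm0.le (sub_nonneg.2 hmle)) hc0) (sub_nonneg.2 hc1), hmM, h1]
  have hkle : k y ≤ (M - m) + 2 * m * c := by
    rw [hk]
    calc Real.sqrt (γ₁ ^ 2 + γ₂ ^ 2 + 2 * γ₁ * γ₂ * Real.cos y)
        ≤ Real.sqrt (((M - m) + 2 * m * c) ^ 2) := Real.sqrt_le_sqrt hksq
      _ = (M - m) + 2 * m * c := Real.sqrt_sq hR0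
  -- sin (y/4) ≥ (y/π) * (√2/2) by concavity
  have hsin : (y / π) * (Real.sqrt 2 / 2) ≤ Real.sin (y / 4) := by
    have hcon := strictConcaveOn_sin_Icc.concaveOn
    have h0m : (0:ℝ) ∈ Set.Icc 0 π := ⟨le_refl _, hπ.le⟩
    have h4m : (π/4 : ℝ) ∈ Set.Icc 0 π := ⟨by positivity, by linarith⟩
    have ha : (0:ℝ) ≤ 1 - y / π := by
      have : y / π ≤ 1 := (div_le_one hπ).2 hyπ
      linarith
    have hb : (0:ℝ) ≤ y / π := by positivity
    have hab : (1 - y / π) + y / π = 1 := by ring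
    have := hcon.2 h0m h4m ha hb hab
    simp only [smul_eq_mul, mul_zero, Real.sin_zero] at this
    rw [Real.sin_pi_div_four] at this
    rw [show (0:ℝ) + y / π * (π / 4) = y / 4 by field_simp; ring] at this
    linarith
  have hsin0 : 0 ≤ (y / π) * (Real.sqrt 2 / 2) := by positivity
  have hsinsq : y ^ 2 / (2 * π ^ 2) ≤ Real.sin (y / 4) ^ 2 := by
    have h2 : Real.sqrt 2 ^ 2 = 2 := Real.sq_sqrt (by norm_num)
    have := pow_le_pow_left₀ hsin0 hsin 2
    calc y ^ 2 / (2 * π ^ 2) = ((y / π) * (Real.sqrt 2 / 2)) ^ 2 := by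
          rw [mul_pow, div_pow, div_pow, h2]; field_simp
      _ ≤ Real.sin (y / 4) ^ 2 := this
  have hcsin : c = 1 - 2 * Real.sin (y / 4) ^ 2 := by
    have := Real.sin_sq_eq_half_sub (y / 4)
    rw [show 2 * (y/4) = y/2 by ring] at this
    rw [hc]; linarith
  have hπ2 : (0:ℝ) < π ^ 2 := by positivity
  calc (γ₁ + γ₂) - k y ≥ (m + M) - ((M - m) + 2 * m * c) := by
        rw [hms]; linarith
    _ = 2 * m * (1 - c) := by ring
    _ = 4 * m * Real.sin (y / 4) ^ 2 := by rw [hcsin]; ring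
    _ ≥ 4 * m * (y ^ 2 / (2 * π ^ 2)) := by
        have := mul_le_mul_of_nonneg_left hsinsq (by linarith : (0:ℝ) ≤ 4 * m)
        linarith
    _ = (2 * m / π ^ 2) * y ^ 2 := by field_simp; ring
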